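/- Solvability of the Scheme-II update system: for every Δt ∈ ℝ, every ρ ≥ 0 and every B = (B₁, B₂, B₃) ∈ ℝ³, the 6×6 real matrix I₆ + (Δt/2)·A is invertible, where A is the block matrix whose upper-left 3×3 block is 0, whose upper-right 3×3 block is ρ·I₃, whose lower-left 3×3 block is −I₃, and whose lower-right 3×3 block is the skew-symmetric cross-product matrix [[0, −B₃, B₂], [B₃, 0, −B₁], [−B₂, B₁, 0]]. (This is the coefficient matrix of the linear system determining (E^{n+1}, u^{n+1}) in Scheme-II, so the implicit update for the electric field and macroscopic velocity is always uniquely solvable.) -/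
import Mathlib


/-- Solvability of the Scheme-II update system: for any `Δt`, any density
`ρ ≥ 0` and any magnetic field `B ∈ ℝ³`, the 6×6 matrix `I₆ + (Δt/2)·A` is
invertible, where `A` has blocks `[[0, ρI₃], [−I₃, B×]]` with `B×` the
skew-symmetric cross-product matrix of `B`. -/
theorem schemeII_update_matrix_invertible (Δt : ℝ) (ρ : ℝ) (hρ : 0 ≤ ρ)
    (B : Fin 3 → ℝ) :
    IsUnit
      ((1 : Matrix (Fin 6) (Fin 6) ℝ) + (Δt / 2) •
        (Matrix.reindex finSumFinEquiv finSumFinEquiv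
          (Matrix.fromBlocks
            (0 : Matrix (Fin 3) (Fin 3) ℝ)
            (ρ • (1 : Matrix (Fin 3) (Fin 3) ℝ))
            (-(1 : Matrix (Fin 3) (Fin 3) ℝ))
            (!![0, -B 2, B 1; B 2, 0, -B 0; -B 1, B 0, 0])) :
          Matrix (Fin 6) (Fin 6) ℝ)) := by
  set t : ℝ := Δt / 2 with ht
  set X : Matrix (Fin 3 ⊕ Fin 3) (Fin 3 ⊕ Fin 3) ℝ :=
    Matrix.fromBlocks (0 : Matrix (Fin 3) (Fin 3) ℝ)
      (ρ • (1 : Matrix (Fin 3) (Fin 3) ℝ))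
      (-(1 : Matrix (Fin 3) (Fin 3) ℝ))
      (!![0, -B 2, B 1; B 2, 0, -B 0; -B 1, B 0, 0]) with hX
  have hre : (1 : Matrix (Fin 6) (Fin 6) ℝ) + t • (Matrix.reindex finSumFinEquiv finSumFinEquiv X)
      = Matrix.reindexAlgEquiv ℝ ℝ finSumFinEquiv (1 + t • X) := by
    simp [Matrix.reindexAlgEquiv_apply, map_add, map_smul]
  rw [hre]
  refine IsUnit.map _ ?_
  rw [Matrix.isUnit_iff_isUnit_det]
  have hblocks : (1 : Matrix (Fin 3 ⊕ Fin 3) (Fin 3 ⊕ Fin 3) ℝ) + t • X =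
      Matrix.fromBlocks (1 : Matrix (Fin 3) (Fin 3) ℝ)
        (t • (ρ • (1 : Matrix (Fin 3) (Fin 3) ℝ)))
        (t • (-(1 : Matrix (Fin 3) (Fin 3) ℝ)))
        (1 + t • (!![0, -B 2, B 1; B 2, 0, -B 0; -B 1, B 0, 0])) := by
    rw [hX, Matrix.fromBlocks_smul, ← Matrix.fromBlocks_one, Matrix.fromBlocks_add]
    simp
  rw [hblocks, Matrix.det_fromBlocks_one₁₁]
  have hdet : ((1 + t • (!![0, -B 2, B 1; B 2, 0, -B 0; -B 1, B 0, 0]) : Matrix (Fin 3) (Fin 3) ℝ)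
      - (t • (-(1 : Matrix (Fin 3) (Fin 3) ℝ))) * (t • (ρ • (1 : Matrix (Fin 3) (Fin 3) ℝ)))).det
      = (1 + t^2 * ρ) * ((1 + t^2 * ρ)^2 + t^2 * (B 0 ^ 2 + B 1 ^ 2 + B 2 ^ 2)) := by
    rw [Matrix.det_fin_three]
    simp [Matrix.one_apply, Matrix.mul_apply, Fin.sum_univ_succ]
    ring
  rw [hdet]
  have h1 : (0:ℝ) < 1 + t^2 * ρ := by positivity
  have h2 : (0:ℝ) < (1 + t^2 * ρ)^2 + t^2 * (B 0 ^ 2 + B 1 ^ 2 + B 2 ^ 2) := by positivity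
  exact (mul_pos h1 h2).ne'.isUnit
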